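/- Let S and Z be closed subspaces of a complex Hilbert space H. Then S ∔ Z = H if and only if S^⊥ ∔ Z^⊥ = H. -/

import Mathlib

open ContinuousLinearMap in
private lemma isCompl_orthogonal_of_isCompl {H : Type*} [NormedAddCommGroup H]
    [InnerProductSpace ℂ H] [CompleteSpace H]
    (S Z : Submodule ℂ H) (hS : IsClosed (S : Set H)) (hZ : IsClosed (Z : Set H))
    (h : IsCompl S Z) : IsCompl Sᗮ Zᗮ := by
  constructor
  · rw [Submodule.disjoint_def]
    intro x hxS hxZ
    have hx : x ∈ Sᗮ ⊓ Zᗮ := ⟨hxS, hxZ⟩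
    rw [Submodule.inf_orthogonal, h.sup_eq_top, Submodule.top_orthogonal_eq_bot] at hx
    exact hx
  · rw [codisjoint_iff, eq_top_iff]
    set P : H →L[ℂ] H := S.subtypeL.comp (S.linearProjOfClosedCompl Z h hS hZ) with hP
    have hPs : ∀ s ∈ S, P s = s := by
      intro s hs
      simp [hP, Submodule.coe_continuous_linearProjOfClosedCompl', Submodule.projectionOnto_apply_left h ⟨s, hs⟩]
    have hPz : ∀ z ∈ Z, P z = 0 := by
      intro z hz
      simp [hP, Submodule.coe_continuous_linearProjOfClosedCompl', Submodule.projectionOnto_apply_right h ⟨z, hz⟩]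
    set Q : H →L[ℂ] H := ContinuousLinearMap.adjoint P with hQ
    intro x _
    have h1 : x - Q x ∈ Sᗮ := by
      intro s hs
      have : inner ℂ s (Q x) = (inner ℂ s x : ℂ) := by
        rw [hQ, ContinuousLinearMap.adjoint_inner_right, hPs s hs]
      rw [inner_sub_right, this, sub_self]
      
    have h2 : Q x ∈ Zᗮ := by
      intro z hz
      rw [hQ, ContinuousLinearMap.adjoint_inner_right, hPz z hz, inner_zero_left]
    have : x = (x - Q x) + Q x := by abel
    rw [this]
    exact Submodule.add_mem_sup h1 h2

/-- For closed subspaces `S`, `Z` of a complex Hilbert space,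
`S ∔ Z = H` if and only if `Sᗮ ∔ Zᗮ = H`. -/
theorem isCompl_iff_isCompl_orthogonal {H : Type*} [NormedAddCommGroup H]
    [InnerProductSpace ℂ H] [CompleteSpace H]
    (S Z : Submodule ℂ H) (hS : IsClosed (S : Set H)) (hZ : IsClosed (Z : Set H)) :
    IsCompl S Z ↔ IsCompl Sᗮ Zᗮ := by
  constructor
  · exact isCompl_orthogonal_of_isCompl S Z hS hZ
  · intro h
    have key := isCompl_orthogonal_of_isCompl Sᗮ Zᗮ
      (Submodule.isClosed_orthogonal S) (Submodule.isClosed_orthogonal Z) h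
    haveI := hS.completeSpace_coe
    haveI := hZ.completeSpace_coe
    rwa [Submodule.orthogonal_orthogonal_eq_closure,
      Submodule.orthogonal_orthogonal_eq_closure,
      hS.submodule_topologicalClosure_eq, hZ.submodule_topologicalClosure_eq] at key
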